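/- arXiv:1203.2124 — 2 statements merged into one kernel-verified Lean document; each statement's English description precedes it below -/
import Mathlib

section
/- Let a = (a₁,a₂,a₃), b = (b₁,b₂,b₃) ∈ ℤ³ satisfy σ₁(a) = σ₁(b), and let c ≠ d be integers. Then |σ₃(q_c)| = |σ₃(q_d)| if and only if either σ₂(a) = σ₂(b) or (c + d)(σ₂(a) − σ₂(b)) = (σ₃(a) − σ₃(b)) − (σ₁(a) + 1)(σ₂(a) − σ₂(b)). -/
/-- The `k`-th elementary symmetric polynomial of the entries of a tuple `x : Fin n → ℤ`. -/
def esymm {n : ℕ} (k : ℕ) (x : Fin n → ℤ) : ℤ :=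
  ∑ s ∈ Finset.powersetCard k (Finset.univ : Finset (Fin n)), ∏ i ∈ s, x i

/-- For integer triples `a`, `b` and `e : ℤ`, the 6-tuple
`q_e = (2(a₁+e)+1, 2(a₂+e)+1, 2(a₃+e)+1, −2(b₁+e)−1, −2(b₂+e)−1, −2(b₃+e)−1)`. -/
def qTuple (a b : Fin 3 → ℤ) (e : ℤ) : Fin 6 → ℤ :=
  ![2 * (a 0 + e) + 1, 2 * (a 1 + e) + 1, 2 * (a 2 + e) + 1,
    -2 * (b 0 + e) - 1, -2 * (b 1 + e) - 1, -2 * (b 2 + e) - 1]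

lemma esymm1_expand (x : Fin 3 → ℤ) : esymm 1 x = x 0 + x 1 + x 2 := by
  unfold esymm
  rw [show (Finset.powersetCard 1 (Finset.univ : Finset (Fin 3))) = {{0},{1},{2}} from by decide]
  simp (config := { decide := true }) [Finset.sum_insert, Finset.prod_insert]
  ring

lemma esymm2_expand (x : Fin 3 → ℤ) : esymm 2 x = x 0 * x 1 + x 0 * x 2 + x 1 * x 2 := by
  unfold esymm
  rw [show (Finset.powersetCard 2 (Finset.univ : Finset (Fin 3))) = {{0,1},{0,2},{1,2}} from by decide]
  simp (config := { decide := true }) [Finset.sum_insert, Finset.prod_insert]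
  ring

lemma esymm3_expand (x : Fin 3 → ℤ) : esymm 3 x = x 0 * x 1 * x 2 := by
  unfold esymm
  rw [show (Finset.powersetCard 3 (Finset.univ : Finset (Fin 3))) = {{0,1,2}} from by decide]
  simp (config := { decide := true }) [Finset.sum_insert, Finset.prod_insert]
  ring

lemma esymm3_six (x : Fin 6 → ℤ) : esymm 3 x =
    x 0 * x 1 * x 2 + x 0 * x 1 * x 3 + x 0 * x 1 * x 4 + x 0 * x 1 * x 5 +
    x 0 * x 2 * x 3 + x 0 * x 2 * x 4 + x 0 * x 2 * x 5 + x 0 * x 3 * x 4 +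
    x 0 * x 3 * x 5 + x 0 * x 4 * x 5 + x 1 * x 2 * x 3 + x 1 * x 2 * x 4 +
    x 1 * x 2 * x 5 + x 1 * x 3 * x 4 + x 1 * x 3 * x 5 + x 1 * x 4 * x 5 +
    x 2 * x 3 * x 4 + x 2 * x 3 * x 5 + x 2 * x 4 * x 5 + x 3 * x 4 * x 5 := by
  unfold esymm
  rw [show (Finset.powersetCard 3 (Finset.univ : Finset (Fin 6))) =
    {{0,1,2}, {0,1,3}, {0,1,4}, {0,1,5}, {0,2,3}, {0,2,4}, {0,2,5}, {0,3,4}, {0,3,5}, {0,4,5},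
     {1,2,3}, {1,2,4}, {1,2,5}, {1,3,4}, {1,3,5}, {1,4,5}, {2,3,4}, {2,3,5}, {2,4,5}, {3,4,5}}
    from by decide]
  simp (config := { decide := true }) [Finset.sum_insert, Finset.prod_insert]
  ring

lemma esymm3_q (a b : Fin 3 → ℤ) (e : ℤ) (hsum : esymm 1 a = esymm 1 b) :
    esymm 3 (qTuple a b e) =
      8 * ((esymm 3 a - esymm 3 b) - (esymm 1 a + 1 + 2 * e) * (esymm 2 a - esymm 2 b)) := by
  rw [esymm3_six, esymm3_expand, esymm3_expand, esymm2_expand, esymm2_expand, esymm1_expand]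
  rw [esymm1_expand, esymm1_expand] at hsum
  have h0 : qTuple a b e 0 = 2 * (a 0 + e) + 1 := rfl
  have h1 : qTuple a b e 1 = 2 * (a 1 + e) + 1 := rfl
  have h2 : qTuple a b e 2 = 2 * (a 2 + e) + 1 := rfl
  have h3 : qTuple a b e 3 = -2 * (b 0 + e) - 1 := rfl
  have h4 : qTuple a b e 4 = -2 * (b 1 + e) - 1 := rfl
  have h5 : qTuple a b e 5 = -2 * (b 2 + e) - 1 := rfl
  rw [h0, h1, h2, h3, h4, h5]
  linear_combination (8*(a 0 * a 1 + a 0 * a 2 + a 1 * a 2) - 16*e^2 - 16*e - 4) * hsum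

/-- **Lemma on orders.** If `σ₁(a) = σ₁(b)` and `c ≠ d` are integers, then
`|σ₃(q_c)| = |σ₃(q_d)|` iff either `σ₂(a) = σ₂(b)` or
`(c + d)(σ₂(a) − σ₂(b)) = (σ₃(a) − σ₃(b)) − (σ₁(a) + 1)(σ₂(a) − σ₂(b))`. -/
theorem abs_esymm_three_eq_iff (a b : Fin 3 → ℤ)
    (hsum : esymm 1 a = esymm 1 b) (c d : ℤ) (hcd : c ≠ d) :
    |esymm 3 (qTuple a b c)| = |esymm 3 (qTuple a b d)| ↔
      (esymm 2 a = esymm 2 b ∨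
        (c + d) * (esymm 2 a - esymm 2 b) =
          (esymm 3 a - esymm 3 b) - (esymm 1 a + 1) * (esymm 2 a - esymm 2 b)) := by
  rw [esymm3_q a b c hsum, esymm3_q a b d hsum, abs_eq_abs]
  constructor
  · rintro (h | h)
    · left
      have h' : (16 : ℤ) * ((c - d) * (esymm 2 a - esymm 2 b)) = 0 := by linear_combination -h
      rcases mul_eq_zero.mp h' with h'' | h''
      · norm_num at h''
      · rcases mul_eq_zero.mp h'' with h3 | h3
        · exact absurd (sub_eq_zero.mp h3) hcd
        · linarith [sub_eq_zero.mp h3]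
    · right
      have h' : (16 : ℤ) * ((c + d) * (esymm 2 a - esymm 2 b) -
          ((esymm 3 a - esymm 3 b) - (esymm 1 a + 1) * (esymm 2 a - esymm 2 b))) = 0 := by
        linear_combination -h
      have h'' := mul_eq_zero.mp h'
      rcases h'' with h3 | h3
      · norm_num at h3
      · linarith [sub_eq_zero.mp h3]
  · rintro (h | h)
    · left
      linear_combination 16 * (d - c) * h
    · right
      linear_combination (-16) * h
end

section
/- For every integer k ≥ 0, the triples a = (15015k + 12909, 0, 0) and b = (15015k + 12925, −3, −13) satisfy the Eschenburg freeness condition and a₁+a₂+a₃ = b₁+b₂+b₃, and for every integer c with −(a₂ + a₃ + 1) < 2c < −(b₂ + b₃ + 1) (equivalently, 0 ≤ c ≤ 7) there exist indices with {i,j,k'} = {1,2,3} and ℓ ∈ {1,2,3} such that gcd(aᵢ + aⱼ + 1 + 2c, a_{k'} − b_ℓ) ≠ 1. -/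
private lemma bezout_gcd_one (x y u v : ℤ) (h : u * x + v * y = 1) : Int.gcd x y = 1 :=
  Int.isCoprime_iff_gcd_eq_one.mp ⟨u, v, h⟩

private lemma gcd_ne_one (d x y : ℤ) (hd : 2 ≤ d) (hx : d ∣ x) (hy : d ∣ y) :
    Int.gcd x y ≠ 1 := by
  intro h
  have hdvd : d ∣ (Int.gcd x y : ℤ) := Int.dvd_coe_gcd hx hy
  rw [h] at hdvd
  have := Int.le_of_dvd one_pos hdvd
  omega

/-- **a second cohomogeneity-two family with no positively curved embedding.**
For every integer `k ≥ 0`, the triples `a = (15015k + 12909, 0, 0)` and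
`b = (15015k + 12925, −3, −13)` satisfy the Eschenburg freeness condition and
`a₁+a₂+a₃ = b₁+b₂+b₃`, and for every integer `c` with
`−(a₂+a₃+1) < 2c < −(b₂+b₃+1)` (equivalently `0 ≤ c ≤ 7`) there are indices with
`{i,j,k'} = {1,2,3}` and `ℓ ∈ {1,2,3}` such that
`gcd(aᵢ + aⱼ + 1 + 2c, a_{k'} − b_ℓ) ≠ 1`. -/
theorem no_positive_bazaikin_family_two (k : ℤ) (hk : 0 ≤ k)
    (a b : Fin 3 → ℤ)
    (ha : a = ![15015 * k + 12909, 0, 0]) (hb : b = ![15015 * k + 12925, -3, -13]) :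
    (∀ σ : Equiv.Perm (Fin 3), Int.gcd (a 0 - b (σ 0)) (a 1 - b (σ 1)) = 1) ∧
    (a 0 + a 1 + a 2 = b 0 + b 1 + b 2) ∧
    (∀ c : ℤ, -(a 1 + a 2 + 1) < 2 * c → 2 * c < -(b 1 + b 2 + 1) →
      ∃ σ : Equiv.Perm (Fin 3), ∃ ℓ : Fin 3,
        Int.gcd (a (σ 0) + a (σ 1) + 1 + 2 * c) (a (σ 2) - b ℓ) ≠ 1) := by
  subst ha hb
  refine ⟨?_, by simp; ring, ?_⟩
  · intro σ
    have hall : ∀ x : Fin 3, x = 0 ∨ x = 1 ∨ x = 2 := by decide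
    have hne : σ 0 ≠ σ 1 := fun h => by simpa using σ.injective h
    rcases hall (σ 0) with h0 | h0 | h0 <;> rcases hall (σ 1) with h1 | h1 | h1 <;>
      rw [h0, h1] <;> simp only [Matrix.cons_val_zero, Matrix.cons_val_one, Matrix.head_cons,
        Matrix.cons_val_two, Matrix.tail_cons]
    · exact absurd (h0.trans h1.symm) hne
    · exact bezout_gcd_one _ _ (-1) (-5) (by ring)
    · exact bezout_gcd_one _ _ 4 5 (by ring)
    · exact bezout_gcd_one _ _ (-4620*k-3977) (-4620*k-3973) (by ring)
    · exact absurd (h0.trans h1.symm) hne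
    · exact bezout_gcd_one _ _ (-4) (4620*k+3973) (by ring)
    · exact bezout_gcd_one _ _ (5005*k+4308) (5005*k+4307) (by ring)
    · exact bezout_gcd_one _ _ 1 (-5005*k-4307) (by ring)
    · exact absurd (h0.trans h1.symm) hne
  · intro c h1 h2
    simp only [Matrix.cons_val_zero, Matrix.cons_val_one, Matrix.head_cons,
      Matrix.cons_val_two, Matrix.tail_cons] at h1 h2
    have hc : c = 0 ∨ c = 1 ∨ c = 2 ∨ c = 3 ∨ c = 4 ∨ c = 5 ∨ c = 6 ∨ c = 7 := by omega
    rcases hc with rfl | rfl | rfl | rfl | rfl | rfl | rfl | rfl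
    · exact ⟨1, 0, by
        simp only [Equiv.Perm.one_apply, Matrix.cons_val_zero, Matrix.cons_val_one,
          Matrix.head_cons, Matrix.cons_val_two, Matrix.tail_cons]
        exact gcd_ne_one 5 _ _ (by norm_num) ⟨3003*k+2582, by ring⟩ ⟨-(3003*k+2585), by ring⟩⟩
    · exact ⟨Equiv.swap 0 2, 1, by
        simp only [Equiv.swap_apply_left, Equiv.swap_apply_right,
          Equiv.swap_apply_of_ne_of_ne (by decide : (1:Fin 3) ≠ 0) (by decide : (1:Fin 3) ≠ 2),
          Matrix.cons_val_zero, Matrix.cons_val_one, Matrix.head_cons,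
          Matrix.cons_val_two, Matrix.tail_cons]
        exact gcd_ne_one 3 _ _ (by norm_num) ⟨1, by ring⟩ ⟨5005*k+4304, by ring⟩⟩
    · exact ⟨1, 0, by
        simp only [Equiv.Perm.one_apply, Matrix.cons_val_zero, Matrix.cons_val_one,
          Matrix.head_cons, Matrix.cons_val_two, Matrix.tail_cons]
        exact gcd_ne_one 11 _ _ (by norm_num) ⟨1365*k+1174, by ring⟩ ⟨-(1365*k+1175), by ring⟩⟩
    · exact ⟨Equiv.swap 0 2, 2, by
        simp only [Equiv.swap_apply_left, Equiv.swap_apply_right,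
          Equiv.swap_apply_of_ne_of_ne (by decide : (1:Fin 3) ≠ 0) (by decide : (1:Fin 3) ≠ 2),
          Matrix.cons_val_zero, Matrix.cons_val_one, Matrix.head_cons,
          Matrix.cons_val_two, Matrix.tail_cons]
        exact gcd_ne_one 7 _ _ (by norm_num) ⟨1, by ring⟩ ⟨2145*k+1846, by ring⟩⟩
    · exact ⟨Equiv.swap 0 2, 1, by
        simp only [Equiv.swap_apply_left, Equiv.swap_apply_right,
          Equiv.swap_apply_of_ne_of_ne (by decide : (1:Fin 3) ≠ 0) (by decide : (1:Fin 3) ≠ 2),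
          Matrix.cons_val_zero, Matrix.cons_val_one, Matrix.head_cons,
          Matrix.cons_val_two, Matrix.tail_cons]
        exact gcd_ne_one 3 _ _ (by norm_num) ⟨3, by ring⟩ ⟨5005*k+4304, by ring⟩⟩
    · exact ⟨1, 0, by
        simp only [Equiv.Perm.one_apply, Matrix.cons_val_zero, Matrix.cons_val_one,
          Matrix.head_cons, Matrix.cons_val_two, Matrix.tail_cons]
        exact gcd_ne_one 5 _ _ (by norm_num) ⟨3003*k+2584, by ring⟩ ⟨-(3003*k+2585), by ring⟩⟩
    · exact ⟨Equiv.swap 0 2, 2, by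
        simp only [Equiv.swap_apply_left, Equiv.swap_apply_right,
          Equiv.swap_apply_of_ne_of_ne (by decide : (1:Fin 3) ≠ 0) (by decide : (1:Fin 3) ≠ 2),
          Matrix.cons_val_zero, Matrix.cons_val_one, Matrix.head_cons,
          Matrix.cons_val_two, Matrix.tail_cons]
        exact gcd_ne_one 13 _ _ (by norm_num) ⟨1, by ring⟩ ⟨1155*k+994, by ring⟩⟩
    · exact ⟨Equiv.swap 0 2, 1, by
        simp only [Equiv.swap_apply_left, Equiv.swap_apply_right,
          Equiv.swap_apply_of_ne_of_ne (by decide : (1:Fin 3) ≠ 0) (by decide : (1:Fin 3) ≠ 2),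
          Matrix.cons_val_zero, Matrix.cons_val_one, Matrix.head_cons,
          Matrix.cons_val_two, Matrix.tail_cons]
        exact gcd_ne_one 3 _ _ (by norm_num) ⟨5, by ring⟩ ⟨5005*k+4304, by ring⟩⟩
end
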